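/- Let f : ℝ^d → ℝ be twice continuously differentiable with μ·I ⪯ ∇²f(w) ⪯ L·I for all w, where 0 < μ ≤ L, and let w* be its unique minimizer. Let (H̃_k)_{k≥0} be symmetric d×d matrices with μ̃·I ⪯ H̃_k ⪯ L̃·I for all k, where 0 < μ̃ and L ≤ L̃ < ∞. Let w₀ ∈ ℝ^d and define w_{k+1} = w_k − α H̃_k⁻¹ g_k with constant step size 0 < α ≤ μ̃/L, where each g_k ∈ ℝ^d satisfies ‖g_k − ∇f(w_k)‖²_{H̃_k⁻¹} ≤ θ̃_g² ‖∇f(w_k)‖²_{H̃_k⁻¹} + ι_k with θ̃_g ∈ [0,1) and ι_k = ι₀ a_g^k for some ι₀ > 0 and a_g ∈ [0,1). Then for all k ≥ 0: f(w_k) − f(w*) ≤ C̃₁ ρ̃₁^k, where C̃₁ = max{ f(w₀) − f(w*), L̃ ι₀ / (μ(1 − θ̃_g²)) } and ρ̃₁ = max{ 1 − α μ (1 − θ̃_g²)/(2 L̃), a_g }. -/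

import Mathlib

open Finset Matrix
open scoped RealInnerProductSpace

noncomputable section

abbrev Vec (d : ℕ) := EuclideanSpace ℝ (Fin d)

/-- The continuous linear operator on Euclidean space associated with a matrix. -/
noncomputable def toOp {d : ℕ} (A : Matrix (Fin d) (Fin d) ℝ) : Vec d →L[ℝ] Vec d :=
  LinearMap.toContinuousLinearMap (Matrix.toEuclideanLin A)

section Aux
variable {d : ℕ} {μt Lt : ℝ}
lemma line_deriv_f (f : Vec d → ℝ) (gradf : Vec d → Vec d)
    (hgrad : ∀ x, HasGradientAt f (gradf x) x) (x u : Vec d) (s : ℝ) :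
    HasDerivAt (fun t : ℝ => f (x + t • u)) ⟪gradf (x + s • u), u⟫ s := by
  have hline : HasDerivAt (fun t : ℝ => x + t • u) u s := by
    simpa using ((hasDerivAt_id s).smul_const u).const_add x
  have := ((hgrad (x + s • u)).hasFDerivAt).comp_hasDerivAt s hline
  simp at this
  exact this

lemma line_deriv_grad (gradf : Vec d → Vec d) (Hf : Vec d → (Vec d →L[ℝ] Vec d))
    (hHf : ∀ x, HasFDerivAt gradf (Hf x) x) (x u : Vec d) (s : ℝ) :
    HasDerivAt (fun t : ℝ => ⟪gradf (x + t • u), u⟫) ⟪Hf (x + s • u) u, u⟫ s := by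
  have hline : HasDerivAt (fun t : ℝ => x + t • u) u s := by
    simpa using ((hasDerivAt_id s).smul_const u).const_add x
  have h1 : HasDerivAt (fun t : ℝ => gradf (x + t • u)) (Hf (x + s • u) u) s :=
    (hHf (x + s • u)).comp_hasDerivAt s hline
  simpa using h1.inner ℝ (hasDerivAt_const s u)
lemma grad_incr_ub (gradf : Vec d → Vec d) (Hf : Vec d → (Vec d →L[ℝ] Vec d))
    (hHf : ∀ x, HasFDerivAt gradf (Hf x) x) (c : ℝ)
    (hub : ∀ x (v : Vec d), ⟪Hf x v, v⟫ ≤ c * ‖v‖ ^ 2)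
    (x u : Vec d) (t : ℝ) (ht : 0 ≤ t) :
    ⟪gradf (x + t • u) - gradf x, u⟫ ≤ c * t * ‖u‖ ^ 2 := by
  set ψ : ℝ → ℝ := fun s => ⟪gradf (x + s • u), u⟫ - c * s * ‖u‖ ^ 2 with hψ
  have hder : ∀ s, HasDerivAt ψ (⟪Hf (x + s • u) u, u⟫ - c * ‖u‖ ^ 2) s := by
    intro s
    have h1 := line_deriv_grad gradf Hf hHf x u s
    have h2 : HasDerivAt (fun s : ℝ => c * s * ‖u‖ ^ 2) (c * ‖u‖ ^ 2) s := by
      simpa [mul_comm, mul_assoc, mul_left_comm] using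
        ((hasDerivAt_id s).const_mul c).mul_const (‖u‖ ^ 2)
    exact h1.sub h2
  have hanti : Antitone ψ := by
    apply antitone_of_deriv_nonpos
    · exact fun s => (hder s).differentiableAt
    · intro s
      rw [(hder s).deriv]
      have := hub (x + s • u) u
      linarith
  have := hanti ht
  simp only [hψ, zero_smul, add_zero, mul_zero, zero_mul, sub_zero] at this
  rw [inner_sub_left]
  linarith

lemma grad_incr_lb (gradf : Vec d → Vec d) (Hf : Vec d → (Vec d →L[ℝ] Vec d))
    (hHf : ∀ x, HasFDerivAt gradf (Hf x) x) (c : ℝ)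
    (hlb : ∀ x (v : Vec d), c * ‖v‖ ^ 2 ≤ ⟪Hf x v, v⟫)
    (x u : Vec d) (t : ℝ) (ht : 0 ≤ t) :
    c * t * ‖u‖ ^ 2 ≤ ⟪gradf (x + t • u) - gradf x, u⟫ := by
  set ψ : ℝ → ℝ := fun s => ⟪gradf (x + s • u), u⟫ - c * s * ‖u‖ ^ 2 with hψ
  have hder : ∀ s, HasDerivAt ψ (⟪Hf (x + s • u) u, u⟫ - c * ‖u‖ ^ 2) s := by
    intro s
    have h1 := line_deriv_grad gradf Hf hHf x u s
    have h2 : HasDerivAt (fun s : ℝ => c * s * ‖u‖ ^ 2) (c * ‖u‖ ^ 2) s := by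
      simpa [mul_comm, mul_assoc, mul_left_comm] using
        ((hasDerivAt_id s).const_mul c).mul_const (‖u‖ ^ 2)
    exact h1.sub h2
  have hmono : Monotone ψ := by
    apply monotone_of_deriv_nonneg
    · exact fun s => (hder s).differentiableAt
    · intro s
      rw [(hder s).deriv]
      have := hlb (x + s • u) u
      linarith
  have := hmono ht
  simp only [hψ, zero_smul, add_zero, mul_zero, zero_mul, sub_zero] at this
  rw [inner_sub_left]
  linarith

/-- descent lemma -/
lemma taylor_ub (f : Vec d → ℝ) (gradf : Vec d → Vec d) (Hf : Vec d → (Vec d →L[ℝ] Vec d))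
    (hgrad : ∀ x, HasGradientAt f (gradf x) x)
    (hHf : ∀ x, HasFDerivAt gradf (Hf x) x) (c : ℝ)
    (hub : ∀ x (v : Vec d), ⟪Hf x v, v⟫ ≤ c * ‖v‖ ^ 2) (x u : Vec d) :
    f (x + u) ≤ f x + ⟪gradf x, u⟫ + c / 2 * ‖u‖ ^ 2 := by
  set φ : ℝ → ℝ := fun t => f (x + t • u) - t * ⟪gradf x, u⟫ - c * t ^ 2 / 2 * ‖u‖ ^ 2 with hφ
  have hder : ∀ s, HasDerivAt φ
      (⟪gradf (x + s • u), u⟫ - ⟪gradf x, u⟫ - c * s * ‖u‖ ^ 2) s := by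
    intro s
    have h1 := line_deriv_f f gradf hgrad x u s
    have h2 : HasDerivAt (fun t : ℝ => t * ⟪gradf x, u⟫) ⟪gradf x, u⟫ s := by
      simpa using (hasDerivAt_id s).mul_const ⟪gradf x, u⟫
    have h3 : HasDerivAt (fun t : ℝ => c * t ^ 2 / 2 * ‖u‖ ^ 2) (c * s * ‖u‖ ^ 2) s := by
      have : HasDerivAt (fun t : ℝ => t ^ 2) (2 * s) s := by
        simpa using hasDerivAt_pow 2 s
      have := ((this.const_mul c).div_const 2).mul_const (‖u‖ ^ 2)
      rw [show c * s * ‖u‖ ^ 2 = c * (2 * s) / 2 * ‖u‖ ^ 2 by ring]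
      exact this
    exact (h1.sub h2).sub h3
  have hanti : AntitoneOn φ (Set.Ici (0:ℝ)) := by
    apply antitoneOn_of_deriv_nonpos (convex_Ici 0)
    · exact (Differentiable.continuous fun s => (hder s).differentiableAt).continuousOn
    · exact fun s _ => ((hder s).differentiableAt).differentiableWithinAt
    · intro s hs
      rw [interior_Ici] at hs
      rw [(hder s).deriv]
      have := grad_incr_ub gradf Hf hHf c hub x u s (le_of_lt hs)
      rw [inner_sub_left] at this
      linarith
  have h01 := hanti (by simp : (0:ℝ) ∈ Set.Ici (0:ℝ)) (by norm_num : (1:ℝ) ∈ Set.Ici (0:ℝ))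
    zero_le_one
  simp only [hφ, zero_smul, add_zero, zero_mul, one_smul, one_mul, one_pow, mul_one,
    mul_zero, sub_zero, ne_eq, zero_pow, zero_div] at h01
  linarith

lemma taylor_lb (f : Vec d → ℝ) (gradf : Vec d → Vec d) (Hf : Vec d → (Vec d →L[ℝ] Vec d))
    (hgrad : ∀ x, HasGradientAt f (gradf x) x)
    (hHf : ∀ x, HasFDerivAt gradf (Hf x) x) (c : ℝ)
    (hlb : ∀ x (v : Vec d), c * ‖v‖ ^ 2 ≤ ⟪Hf x v, v⟫) (x u : Vec d) :
    f x + ⟪gradf x, u⟫ + c / 2 * ‖u‖ ^ 2 ≤ f (x + u) := by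
  set φ : ℝ → ℝ := fun t => f (x + t • u) - t * ⟪gradf x, u⟫ - c * t ^ 2 / 2 * ‖u‖ ^ 2 with hφ
  have hder : ∀ s, HasDerivAt φ
      (⟪gradf (x + s • u), u⟫ - ⟪gradf x, u⟫ - c * s * ‖u‖ ^ 2) s := by
    intro s
    have h1 := line_deriv_f f gradf hgrad x u s
    have h2 : HasDerivAt (fun t : ℝ => t * ⟪gradf x, u⟫) ⟪gradf x, u⟫ s := by
      simpa using (hasDerivAt_id s).mul_const ⟪gradf x, u⟫
    have h3 : HasDerivAt (fun t : ℝ => c * t ^ 2 / 2 * ‖u‖ ^ 2) (c * s * ‖u‖ ^ 2) s := by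
      have : HasDerivAt (fun t : ℝ => t ^ 2) (2 * s) s := by
        simpa using hasDerivAt_pow 2 s
      have := ((this.const_mul c).div_const 2).mul_const (‖u‖ ^ 2)
      rw [show c * s * ‖u‖ ^ 2 = c * (2 * s) / 2 * ‖u‖ ^ 2 by ring]
      exact this
    exact (h1.sub h2).sub h3
  have hmono : MonotoneOn φ (Set.Ici (0:ℝ)) := by
    apply monotoneOn_of_deriv_nonneg (convex_Ici 0)
    · exact (Differentiable.continuous fun s => (hder s).differentiableAt).continuousOn
    · exact fun s _ => ((hder s).differentiableAt).differentiableWithinAt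
    · intro s hs
      rw [interior_Ici] at hs
      rw [(hder s).deriv]
      have := grad_incr_lb gradf Hf hHf c hlb x u s (le_of_lt hs)
      rw [inner_sub_left] at this
      linarith
  have h01 := hmono (by simp : (0:ℝ) ∈ Set.Ici (0:ℝ)) (by norm_num : (1:ℝ) ∈ Set.Ici (0:ℝ))
    zero_le_one
  simp only [hφ, zero_smul, add_zero, zero_mul, one_smul, one_mul, one_pow, mul_one,
    mul_zero, sub_zero, ne_eq, zero_pow, zero_div] at h01
  linarith
lemma toOp_apply (A : Matrix (Fin d) (Fin d) ℝ) (v : Vec d) :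
    toOp A v = Matrix.toEuclideanLin A v := rfl

lemma toOp_sym {A : Matrix (Fin d) (Fin d) ℝ} (hs : A.IsSymm) (u v : Vec d) :
    ⟪toOp A u, v⟫ = ⟪u, toOp A v⟫ := by
  have her : A.IsHermitian := by
    rwa [Matrix.IsHermitian, Matrix.conjTranspose_eq_transpose_of_trivial]
  exact (Matrix.isHermitian_iff_isSymmetric.1 her) u v

lemma toOp_det_isUnit {A : Matrix (Fin d) (Fin d) ℝ} (hμt : 0 < μt)
    (hlb : ∀ v : Vec d, μt * ‖v‖ ^ 2 ≤ ⟪toOp A v, v⟫) : IsUnit A.det := by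
  rw [isUnit_iff_ne_zero]
  intro hdet
  obtain ⟨v, hv0, hv⟩ := (Matrix.exists_mulVec_eq_zero_iff).2 hdet
  set v' : Vec d := (WithLp.equiv 2 (Fin d → ℝ)).symm v with hv'
  have hAv : toOp A v' = 0 := by
    rw [toOp_apply, hv', WithLp.equiv_symm_apply, Matrix.toEuclideanLin_apply_piLp_toLp, hv]
    simp
  have := hlb v'
  rw [hAv] at this
  simp only [inner_zero_left] at this
  have hvnorm : ‖v'‖ = 0 := by
    by_contra hne
    have h1 : 0 < ‖v'‖ := lt_of_le_of_ne (norm_nonneg v') (Ne.symm hne)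
    nlinarith [mul_pos hμt (mul_pos h1 h1)]
  exact hv0 (by simpa [hv'] using norm_eq_zero.1 hvnorm)

lemma toOp_inv_right {A : Matrix (Fin d) (Fin d) ℝ} (hdet : IsUnit A.det) (v : Vec d) :
    toOp A (toOp A⁻¹ v) = v := by
  simp only [toOp_apply, Matrix.toEuclideanLin_apply]
  simp [Matrix.mulVec_mulVec, Matrix.mul_nonsing_inv A hdet]

lemma toOp_inv_left {A : Matrix (Fin d) (Fin d) ℝ} (hdet : IsUnit A.det) (v : Vec d) :
    toOp A⁻¹ (toOp A v) = v := by
  simp only [toOp_apply, Matrix.toEuclideanLin_apply]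
  simp [Matrix.mulVec_mulVec, Matrix.nonsing_inv_mul A hdet]

lemma inv_isSymm {A : Matrix (Fin d) (Fin d) ℝ} (hdet : IsUnit A.det) (hs : A.IsSymm) :
    (A⁻¹).IsSymm := by
  rw [Matrix.IsSymm, Matrix.transpose_nonsing_inv, hs.eq]

lemma toOp_inv_pos {A : Matrix (Fin d) (Fin d) ℝ} (hμt : 0 < μt) (hs : A.IsSymm)
    (hlb : ∀ v : Vec d, μt * ‖v‖ ^ 2 ≤ ⟪toOp A v, v⟫) (v : Vec d) :
    μt * ‖toOp A⁻¹ v‖ ^ 2 ≤ ⟪toOp A⁻¹ v, v⟫ := by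
  have hdet := toOp_det_isUnit hμt hlb
  set u := toOp A⁻¹ v with hu
  have hv : toOp A u = v := toOp_inv_right hdet v
  calc μt * ‖u‖ ^ 2 ≤ ⟪toOp A u, u⟫ := hlb u
    _ = ⟪u, v⟫ := by rw [real_inner_comm, hv]
    _ = ⟪u, v⟫ := rfl

lemma toOp_CS {A : Matrix (Fin d) (Fin d) ℝ} (hμt : 0 < μt) (hs : A.IsSymm)
    (hlb : ∀ v : Vec d, μt * ‖v‖ ^ 2 ≤ ⟪toOp A v, v⟫) (x y : Vec d) :
    ⟪toOp A x, y⟫ ^ 2 ≤ ⟪toOp A x, x⟫ * ⟪toOp A y, y⟫ := by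
  have quad : ∀ t : ℝ, 0 ≤ ⟪toOp A y, y⟫ * (t * t) + (2 * ⟪toOp A x, y⟫) * t
      + ⟪toOp A x, x⟫ := by
    intro t
    have h0 : (0:ℝ) ≤ ⟪toOp A (x + t • y), x + t • y⟫ :=
      le_trans (by positivity) (hlb (x + t • y))
    have hmap : toOp A (x + t • y) = toOp A x + t • toOp A y := by
      simp [map_add]
    have hyx : ⟪toOp A y, x⟫ = ⟪toOp A x, y⟫ := by
      rw [toOp_sym hs y x, real_inner_comm]
    rw [hmap, inner_add_left, inner_add_right, inner_add_right, real_inner_smul_left,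
      real_inner_smul_right, real_inner_smul_right, real_inner_smul_left, hyx] at h0
    nlinarith [h0]
  have hd := discrim_le_zero quad
  rw [discrim] at hd
  nlinarith [hd]

lemma toOp_inv_lb {A : Matrix (Fin d) (Fin d) ℝ} (hμt : 0 < μt) (hLt : 0 < Lt) (hs : A.IsSymm)
    (hlb : ∀ v : Vec d, μt * ‖v‖ ^ 2 ≤ ⟪toOp A v, v⟫)
    (hub : ∀ v : Vec d, ⟪toOp A v, v⟫ ≤ Lt * ‖v‖ ^ 2) (v : Vec d) :
    ‖v‖ ^ 2 ≤ Lt * ⟪toOp A⁻¹ v, v⟫ := by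
  have hdet := toOp_det_isUnit hμt hlb
  set u := toOp A⁻¹ v with hu
  have hv : toOp A u = v := toOp_inv_right hdet v
  have hCS := toOp_CS hμt hs hlb u (toOp A u)
  have h2 := hub (toOp A u)
  have hs0 : (0:ℝ) ≤ ⟪toOp A u, u⟫ := le_trans (by positivity) (hlb u)
  have hN : ⟪toOp A u, toOp A u⟫ = ‖toOp A u‖ ^ 2 := real_inner_self_eq_norm_sq _
  have huv : ⟪u, v⟫ = ⟪toOp A u, u⟫ := by rw [← hv, real_inner_comm]
  rw [← hv]
  rcases eq_or_lt_of_le (norm_nonneg (toOp A u)) with h | h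
  · rw [← h]
    have : ⟪toOp A u, u⟫ = ⟪u, toOp A u⟫ := real_inner_comm _ _
    nlinarith [hs0]
  · have hN0 : 0 < ‖toOp A u‖ ^ 2 := by positivity
    have key : ‖toOp A u‖ ^ 2 * ‖toOp A u‖ ^ 2 ≤ ⟪toOp A u, u⟫ * (Lt * ‖toOp A u‖ ^ 2) := by
      nlinarith [hCS, h2, hs0, hN]
    have : ⟪u, toOp A u⟫ = ⟪toOp A u, u⟫ := real_inner_comm _ _
    rw [this]
    nlinarith [key, hN0]

end Aux

set_option maxHeartbeats 1000000 in
/-- Global linear convergence with deterministic adaptive gradient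
sampling for strongly convex functions. -/
theorem global_linear_convergence_deterministic {d : ℕ}
    (L μ μt Lt α θg a_g ι₀ : ℝ)
    (hL : 0 < L) (hμ : 0 < μ) (hμL : μ ≤ L) (hμt : 0 < μt) (hLt : L ≤ Lt)
    (f : Vec d → ℝ) (gradf : Vec d → Vec d) (Hf : Vec d → (Vec d →L[ℝ] Vec d))
    (hsmooth : ContDiff ℝ 2 f)
    (hgrad : ∀ x, HasGradientAt f (gradf x) x)
    (hHf : ∀ x, HasFDerivAt gradf (Hf x) x)
    (hHub : ∀ x (v : Vec d), ⟪Hf x v, v⟫ ≤ L * ‖v‖ ^ 2)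
    (hHlb : ∀ x (v : Vec d), μ * ‖v‖ ^ 2 ≤ ⟪Hf x v, v⟫)
    (wstar : Vec d) (hmin : ∀ x, f wstar ≤ f x)
    (huniq : ∀ x, (∀ y, f x ≤ f y) → x = wstar)
    (Ht : ℕ → Matrix (Fin d) (Fin d) ℝ)
    (hHtsym : ∀ k, (Ht k).IsSymm)
    (hHtlb : ∀ k (v : Vec d), μt * ‖v‖ ^ 2 ≤ ⟪toOp (Ht k) v, v⟫)
    (hHtub : ∀ k (v : Vec d), ⟪toOp (Ht k) v, v⟫ ≤ Lt * ‖v‖ ^ 2)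
    (w g : ℕ → Vec d) (hα0 : 0 < α) (hα : α ≤ μt / L)
    (hiter : ∀ k, w (k + 1) = w k - α • toOp (Ht k)⁻¹ (g k))
    (hθg : θg ∈ Set.Ico (0 : ℝ) 1) (hι₀ : 0 < ι₀) (hag : a_g ∈ Set.Ico (0 : ℝ) 1)
    (hnorm : ∀ k, ⟪toOp (Ht k)⁻¹ (g k - gradf (w k)), g k - gradf (w k)⟫ ≤
      θg ^ 2 * ⟪toOp (Ht k)⁻¹ (gradf (w k)), gradf (w k)⟫ + ι₀ * a_g ^ k) :
    ∀ k, f (w k) - f wstar ≤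
      max (f (w 0) - f wstar) (Lt * ι₀ / (μ * (1 - θg ^ 2))) *
        (max (1 - α * μ * (1 - θg ^ 2) / (2 * Lt)) a_g) ^ k := by
  obtain ⟨hθ0, hθ1⟩ := hθg
  obtain ⟨hag0, hag1⟩ := hag
  have hθ2 : 0 < 1 - θg ^ 2 := by nlinarith
  have hLt0 : 0 < Lt := lt_of_lt_of_le hL hLt
  have hC2 : 0 < Lt * ι₀ / (μ * (1 - θg ^ 2)) := by positivity
  set C := max (f (w 0) - f wstar) (Lt * ι₀ / (μ * (1 - θg ^ 2))) with hCdef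
  set ρ := max (1 - α * μ * (1 - θg ^ 2) / (2 * Lt)) a_g with hρdef
  have hCpos : 0 < C := lt_of_lt_of_le hC2 (le_max_right _ _)
  have hρ0 : 0 ≤ ρ := le_trans hag0 (le_max_right _ _)
  rcases Nat.eq_zero_or_pos d with hd | hd
  · subst hd
    intro k
    have hw : w k = wstar := Subsingleton.elim _ _
    rw [hw, sub_self]
    positivity
  -- main case
  have hαL : α * L ≤ μt := (le_div_iff₀ hL).1 hα
  have hPL : ∀ n, 2 * μ * (f (w n) - f wstar) ≤ ‖gradf (w n)‖ ^ 2 := by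
    intro n
    have h := taylor_lb f gradf Hf hgrad hHf μ hHlb (w n) (wstar - w n)
    rw [add_sub_cancel] at h
    have h2 : -(‖gradf (w n)‖ * ‖wstar - w n‖) ≤ ⟪gradf (w n), wstar - w n⟫ :=
      neg_le_of_neg_le (by
        have := abs_real_inner_le_norm (gradf (w n)) (wstar - w n)
        cases abs_cases ⟪gradf (w n), wstar - w n⟫ <;> linarith [this])
    have hminn := hmin (w n)
    nlinarith [sq_nonneg (‖gradf (w n)‖ - μ * ‖wstar - w n‖)]
  have key : ∀ n, f (w (n + 1)) - f wstar ≤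
      (1 - α * μ * (1 - θg ^ 2) / Lt) * (f (w n) - f wstar)
        + α / 2 * (ι₀ * a_g ^ n) := by
    intro n
    have hdet : IsUnit (Ht n).det := toOp_det_isUnit hμt (hHtlb n)
    set T := toOp (Ht n)⁻¹ with hT
    set a := gradf (w n) with ha
    set q := g n with hq
    set e := q - a with he
    have hTsym : ∀ u v : Vec d, ⟪T u, v⟫ = ⟪u, T v⟫ :=
      toOp_sym (inv_isSymm hdet (hHtsym n))
    have hTpos : ∀ v : Vec d, μt * ‖T v‖ ^ 2 ≤ ⟪T v, v⟫ :=
      fun v => toOp_inv_pos hμt (hHtsym n) (hHtlb n) v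
    have hTlbv : ‖a‖ ^ 2 ≤ Lt * ⟪T a, a⟫ :=
      toOp_inv_lb hμt hLt0 (hHtsym n) (hHtlb n) (hHtub n) a
    have hu : w (n + 1) = w n + -(α • T q) := by
      rw [hiter n, sub_eq_add_neg]
    have hdesc := taylor_ub f gradf Hf hgrad hHf L hHub (w n) (-(α • T q))
    rw [← hu] at hdesc
    have hinner1 : ⟪a, -(α • T q)⟫ = -(α * ⟪a, T q⟫) := by
      rw [inner_neg_right, real_inner_smul_right]
    have hnrm : ‖-(α • T q)‖ ^ 2 = α ^ 2 * ‖T q‖ ^ 2 := by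
      rw [norm_neg, norm_smul, Real.norm_eq_abs, abs_of_pos hα0, mul_pow]
    have hqa : q = a + e := by rw [he]; abel
    have hexp1 : ⟪a, T q⟫ = ⟪T a, a⟫ + ⟪T a, e⟫ := by
      rw [← hTsym a q, hqa, inner_add_right]
    have hexp2 : ⟪T q, q⟫ = ⟪T a, a⟫ + 2 * ⟪T a, e⟫ + ⟪T e, e⟫ := by
      nth_rewrite 1 [hqa]
      rw [hqa, map_add, inner_add_left, inner_add_right, inner_add_right]
      have hea : ⟪T e, a⟫ = ⟪T a, e⟫ := by rw [hTsym e a, real_inner_comm]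
      rw [hea]; ring
    have hTq0 : (0:ℝ) ≤ ⟪T q, q⟫ := le_trans (by positivity) (hTpos q)
    have hTa0 : (0:ℝ) ≤ ⟪T a, a⟫ := le_trans (by positivity) (hTpos a)
    have hstep1 : L / 2 * ‖-(α • T q)‖ ^ 2 ≤ α / 2 * ⟪T q, q⟫ := by
      rw [hnrm]
      have h1 := hTpos q
      have e1 := mul_le_mul_of_nonneg_left h1 hα0.le
      have e2 := mul_le_mul_of_nonneg_right hαL (mul_nonneg hα0.le (sq_nonneg ‖T q‖))
      nlinarith [e1, e2]
    have hmain : f (w (n + 1)) ≤ f (w n) - α / 2 * ⟪T a, a⟫ + α / 2 * ⟪T e, e⟫ := by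
      rw [hinner1, hexp1] at hdesc
      rw [hexp2] at hstep1
      linarith [hdesc, hstep1]
    have hTee : ⟪T e, e⟫ ≤ θg ^ 2 * ⟪T a, a⟫ + ι₀ * a_g ^ n := by
      have := hnorm n
      rw [← ha, ← hq, ← hT, ← he] at this
      exact this
    have hXD : 2 * μ * (f (w n) - f wstar) ≤ Lt * ⟪T a, a⟫ :=
      le_trans (hPL n) hTlbv
    have hcoef : (0:ℝ) ≤ α / 2 * (1 - θg ^ 2) := by positivity
    have h2 : α * μ * (1 - θg ^ 2) / Lt * (f (w n) - f wstar)
        ≤ α / 2 * (1 - θg ^ 2) * ⟪T a, a⟫ := by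
      rw [div_mul_eq_mul_div, div_le_iff₀ hLt0]
      nlinarith [mul_le_mul_of_nonneg_left hXD hcoef]
    have h3 : α / 2 * ⟪T e, e⟫ ≤ α / 2 * (θg ^ 2 * ⟪T a, a⟫ + ι₀ * a_g ^ n) :=
      mul_le_mul_of_nonneg_left hTee (by positivity : (0:ℝ) ≤ α / 2)
    nlinarith [hmain, h2, h3]
  intro k
  induction k with
  | zero =>
    rw [pow_zero, mul_one, hCdef]
    exact le_max_left _ _
  | succ n ih =>
    have hD : 0 ≤ f (w n) - f wstar := sub_nonneg.2 (hmin _)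
    have hk := key n
    have hβ0 : 0 ≤ α * μ * (1 - θg ^ 2) / Lt := by positivity
    have hβ1 : α * μ * (1 - θg ^ 2) / Lt ≤ 1 := by
      rw [div_le_one hLt0]
      have hμtLt : μt ≤ Lt := by
        have h1 := hHtlb 0 (EuclideanSpace.single ⟨0, hd⟩ 1)
        have h2 := hHtub 0 (EuclideanSpace.single ⟨0, hd⟩ 1)
        rw [EuclideanSpace.norm_single] at h1 h2
        norm_num at h1 h2
        linarith
      nlinarith [mul_pos hα0 hμ]
    have hρ1 : 1 - α * μ * (1 - θg ^ 2) / (2 * Lt) ≤ ρ := le_max_left _ _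
    have hρhalf : 1 - α * μ * (1 - θg ^ 2) / Lt / 2 ≤ ρ := by
      have : α * μ * (1 - θg ^ 2) / (2 * Lt) = α * μ * (1 - θg ^ 2) / Lt / 2 := by
        ring
      linarith [hρ1, this ▸ hρ1]
    have hagρ : a_g ≤ ρ := le_max_right _ _
    have hagk : a_g ^ n ≤ ρ ^ n := pow_le_pow_left₀ hag0 hagρ n
    have hρn : 0 ≤ ρ ^ n := pow_nonneg hρ0 n
    have hCb : Lt * ι₀ / (μ * (1 - θg ^ 2)) ≤ C := le_max_right _ _
    have step2 : f (w (n + 1)) - f wstar ≤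
        (1 - α * μ * (1 - θg ^ 2) / Lt) * (C * ρ ^ n) + α / 2 * (ι₀ * ρ ^ n) := by
      have e1 := mul_le_mul_of_nonneg_left ih (by linarith : 0 ≤ 1 - α * μ * (1 - θg ^ 2) / Lt)
      have e2 := mul_le_mul_of_nonneg_left hagk (by positivity : (0:ℝ) ≤ α / 2 * ι₀)
      nlinarith [hk, e1, e2]
    have hfac : (1 - α * μ * (1 - θg ^ 2) / Lt) * C + α / 2 * ι₀ ≤ C * ρ := by
      have h1 : α / 2 * ι₀ ≤ α * μ * (1 - θg ^ 2) / Lt / 2 * C := by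
        have heq : α * μ * (1 - θg ^ 2) / Lt / 2 * (Lt * ι₀ / (μ * (1 - θg ^ 2)))
            = α / 2 * ι₀ := by
          field_simp
        calc α / 2 * ι₀ = α * μ * (1 - θg ^ 2) / Lt / 2 * (Lt * ι₀ / (μ * (1 - θg ^ 2))) :=
              heq.symm
          _ ≤ α * μ * (1 - θg ^ 2) / Lt / 2 * C :=
              mul_le_mul_of_nonneg_left hCb (by positivity)
      have h2 : (1 - α * μ * (1 - θg ^ 2) / Lt / 2) * C ≤ ρ * C :=
        mul_le_mul_of_nonneg_right hρhalf hCpos.le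
      nlinarith [h1, h2]
    calc f (w (n + 1)) - f wstar
        ≤ (1 - α * μ * (1 - θg ^ 2) / Lt) * (C * ρ ^ n) + α / 2 * (ι₀ * ρ ^ n) := step2
      _ = ((1 - α * μ * (1 - θg ^ 2) / Lt) * C + α / 2 * ι₀) * ρ ^ n := by ring
      _ ≤ (C * ρ) * ρ ^ n := mul_le_mul_of_nonneg_right hfac hρn
      _ = C * ρ ^ (n + 1) := by ring
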